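/- (Radford's theorem, vector space case) Let (∂ : I → H, i) be a Hopf algebra projection over a field k and set B = RKer(∂). The linear maps Φ : B ⊗ H → I, Φ(a ⊗ x) = a · i(x), and Ψ : I → B ⊗ H, Ψ(v) = Σ f(v') ⊗ ∂(v'') (well defined since f takes values in B), are mutually inverse linear isomorphisms. Moreover, Φ is an algebra isomorphism from the smash product B ⊗̂ H, with product (a ⊗ x)(b ⊗ y) = Σ (a · (i(x') ▷_ad b)) ⊗ (x'' y), to I; equivalently (a i(x))(b i(y)) = Σ (a (i(x') ▷_ad b)) i(x'' y) for all a, b ∈ B and x, y ∈ H. -/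

import Mathlib

open TensorProduct

/-- `RKer(∂) = {v ∈ I : Σ v' ⊗ ∂(v'') = v ⊗ 1}`, as a submodule of `I`. -/
noncomputable def RKerSub (k : Type*) {I H : Type*} [Field k] [Ring I] [Ring H]
    [HopfAlgebra k I] [HopfAlgebra k H] (p : I →ₐc[k] H) : Submodule k I :=
  LinearMap.ker
    (((TensorProduct.map (LinearMap.id : I →ₗ[k] I) p.toLinearMap)
        ∘ₗ (Coalgebra.comul (R := k))) - (TensorProduct.mk k I H).flip 1)

/-- The left adjoint action of a Hopf algebra on itself:
`adT (a ⊗ b) = Σ a' b S(a'')`. -/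
noncomputable def adT (k A : Type*) [CommSemiring k] [Semiring A] [HopfAlgebra k A] :
    A ⊗[k] A →ₗ[k] A :=
  (LinearMap.mul' k A)
    ∘ₗ (TensorProduct.map LinearMap.id (LinearMap.mul' k A))
    ∘ₗ (TensorProduct.map LinearMap.id
          (TensorProduct.map LinearMap.id (HopfAlgebra.antipode (R := k))))
    ∘ₗ (TensorProduct.map LinearMap.id (TensorProduct.comm k A A).toLinearMap)
    ∘ₗ (TensorProduct.assoc k A A A).toLinearMap
    ∘ₗ (TensorProduct.map (Coalgebra.comul (R := k)) LinearMap.id)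

/-- The kernel generator map `f(v) = Σ v' · i(∂(S(v'')))`. -/
noncomputable def fker {k I H : Type*} [Field k] [Ring I] [Ring H]
    [HopfAlgebra k I] [HopfAlgebra k H] (p : I →ₐc[k] H) (i : H →ₐc[k] I) : I →ₗ[k] I :=
  (LinearMap.mul' k I)
    ∘ₗ (TensorProduct.map LinearMap.id
          (i.toLinearMap ∘ₗ p.toLinearMap ∘ₗ HopfAlgebra.antipode (R := k)))
    ∘ₗ (Coalgebra.comul (R := k))


section Helpers

open Coalgebra

variable {k A : Type*} [CommSemiring k] [Semiring A] [HopfAlgebra k A]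


lemma sum_counit_smul_left {c : A} {ι : Type*} (r : Repr k c ι) :
    ∑ i ∈ r.index, counit (R := k) (r.right i) • r.left i = c := by
  have h := congrArg (TensorProduct.rid k A) (Coalgebra.sum_tmul_counit_eq r)
  rw [map_sum] at h
  simp only [TensorProduct.rid_tmul, one_smul] at h
  exact h

lemma sum_counit_smul_right {c : A} {ι : Type*} (r : Repr k c ι) :
    ∑ i ∈ r.index, counit (R := k) (r.left i) • r.right i = c := by
  have h := congrArg (TensorProduct.lid k A) (Coalgebra.sum_counit_tmul_eq r)
  rw [map_sum] at h
  simp only [TensorProduct.lid_tmul, one_smul] at h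
  exact h

lemma repr_assoc_apply {M : Type*} [AddCommMonoid M] [Module k M]
    {c : A} {ι : Type*} {κ Λ : ι → Type*} (r : Repr k c ι) (s : ∀ i : r.ι, Repr k (r.left i) (κ i))
    (t : ∀ i : r.ι, Repr k (r.right i) (Λ i)) (T : A ⊗[k] (A ⊗[k] A) →ₗ[k] M) :
    ∑ i ∈ r.index, ∑ j ∈ (s i).index,
        T ((s i).left j ⊗ₜ[k] ((s i).right j ⊗ₜ[k] r.right i))
      = ∑ i ∈ r.index, ∑ j ∈ (t i).index,
        T (r.left i ⊗ₜ[k] ((t i).left j ⊗ₜ[k] (t i).right j)) := by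
  have h := congrArg T (Coalgebra.sum_tmul_tmul_eq r s t)
  rw [map_sum, map_sum] at h
  simp only [map_sum] at h
  exact h

lemma convE (ψ φ : A →ₗ[k] A) {c : A} {ι : Type*} {κ : ι → Type*} (r : Repr k c ι)
    (s : ∀ i : r.ι, Repr k (r.left i) (κ i)) :
    ∑ i ∈ r.index, ∑ j ∈ (s i).index,
        ψ ((s i).left j) * φ (HopfAlgebra.antipode (R := k) ((s i).right j) * r.right i)
      = ψ c * φ 1 := by
  have h := repr_assoc_apply r s (fun i => ℛ k (r.right i))
    ((LinearMap.mul' k A) ∘ₗ TensorProduct.map ψ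
      (φ ∘ₗ (LinearMap.mul' k A) ∘ₗ
        TensorProduct.map (HopfAlgebra.antipode (R := k)) LinearMap.id))
  simp only [LinearMap.comp_apply, TensorProduct.map_tmul, LinearMap.mul'_apply,
    LinearMap.id_coe, id_eq] at h
  rw [h]
  have key : ∀ i ∈ r.index,
      ∑ j ∈ (ℛ k (r.right i)).index,
          ψ (r.left i) * φ (HopfAlgebra.antipode (R := k) ((ℛ k (r.right i)).left j)
            * (ℛ k (r.right i)).right j)
        = counit (R := k) (r.right i) • (ψ (r.left i) * φ 1) := by
    intro i _
    rw [← Finset.mul_sum, ← map_sum, HopfAlgebra.sum_antipode_mul_eq_smul, map_smul,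
      mul_smul_comm]
  rw [Finset.sum_congr rfl key]
  calc ∑ x ∈ r.index, counit (R := k) (r.right x) • (ψ (r.left x) * φ 1)
      = (∑ x ∈ r.index, ψ (counit (R := k) (r.right x) • r.left x)) * φ 1 := by
        rw [Finset.sum_mul]
        exact Finset.sum_congr rfl fun x _ => by rw [map_smul, smul_mul_assoc]
    _ = ψ c * φ 1 := by rw [← map_sum, sum_counit_smul_left r]

/-- Push a representation through a bialgebra hom. -/
noncomputable def reprBMap {B : Type*} [Semiring B] [HopfAlgebra k B]
    (φ : A →ₐc[k] B) {a : A} {ι : Type*} (r : Repr k a ι) : Repr k (φ a) ι where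
  index := r.index
  left := fun i => φ (r.left i)
  right := fun i => φ (r.right i)
  eq := by
    have h := LinearMap.congr_fun (CoalgHomClass.map_comp_comul φ) a
    simp only [LinearMap.comp_apply, LinearMap.coe_coe] at h
    rw [← h, ← r.eq, map_sum]
    simp

/-- A representation of a product from representations of the factors. -/
noncomputable def reprMul {a b : A} {ι ι' : Type*} (ra : Repr k a ι) (rb : Repr k b ι') :
    Repr k (a * b) (ι × ι') where
  index := ra.index ×ˢ rb.index
  left := fun p => ra.left p.1 * rb.left p.2
  right := fun p => ra.right p.1 * rb.right p.2
  eq := by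
    rw [Bialgebra.comul_mul, ← ra.eq, ← rb.eq, Finset.sum_mul_sum]
    rw [Finset.sum_product]
    simp [Algebra.TensorProduct.tmul_mul_tmul]

lemma antipode_one' : HopfAlgebra.antipode (R := k) (1 : A) = 1 := by
  have h := HopfAlgebra.mul_antipode_rTensor_comul_apply (R := k) (a := (1 : A))
  simpa [Algebra.TensorProduct.one_def] using h

lemma hom_antipode {B : Type*} [Semiring B] [HopfAlgebra k B] (φ : A →ₐc[k] B) (a : A) :
    φ (HopfAlgebra.antipode (R := k) a) = HopfAlgebra.antipode (R := k) (φ a) := by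
  classical
  set r := ℛ k a with hr
  have h := repr_assoc_apply r (fun i => ℛ k (r.left i)) (fun i => ℛ k (r.right i))
    ((LinearMap.mul' k B) ∘ₗ TensorProduct.map
      ((HopfAlgebra.antipode (R := k)) ∘ₗ (φ : A →ₗ[k] B))
      ((φ : A →ₗ[k] B) ∘ₗ (LinearMap.mul' k A) ∘ₗ
        TensorProduct.map LinearMap.id (HopfAlgebra.antipode (R := k))))
  simp only [LinearMap.comp_apply, TensorProduct.map_tmul, LinearMap.mul'_apply,
    LinearMap.id_coe, id_eq, BialgHom.coe_toLinearMap] at h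
  -- the `t`-grouping evaluates to `antipode (φ a)`
  have hR : ∑ i ∈ r.index, ∑ j ∈ (ℛ k (r.right i)).index,
      HopfAlgebra.antipode (R := k) (φ (r.left i)) *
        φ ((ℛ k (r.right i)).left j * HopfAlgebra.antipode (R := k) ((ℛ k (r.right i)).right j))
      = HopfAlgebra.antipode (R := k) (φ a) := by
    have step : ∀ i ∈ r.index, ∑ j ∈ (ℛ k (r.right i)).index,
        HopfAlgebra.antipode (R := k) (φ (r.left i)) *
          φ ((ℛ k (r.right i)).left j *
            HopfAlgebra.antipode (R := k) ((ℛ k (r.right i)).right j))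
        = counit (R := k) (r.right i) •
            HopfAlgebra.antipode (R := k) (φ (r.left i)) := by
      intro i _
      rw [← Finset.mul_sum, ← map_sum, HopfAlgebra.sum_mul_antipode_eq_smul (ℛ k (r.right i)),
        map_smul, map_one, mul_smul_comm, mul_one]
    rw [Finset.sum_congr rfl step]
    conv_rhs => rw [← sum_counit_smul_left r]
    simp only [map_sum, map_smul]
  -- the `s`-grouping evaluates to `φ (antipode a)`
  have hL : ∑ i ∈ r.index, ∑ j ∈ (ℛ k (r.left i)).index,
      HopfAlgebra.antipode (R := k) (φ ((ℛ k (r.left i)).left j)) *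
        φ ((ℛ k (r.left i)).right j * HopfAlgebra.antipode (R := k) (r.right i))
      = φ (HopfAlgebra.antipode (R := k) a) := by
    have step : ∀ i ∈ r.index, ∑ j ∈ (ℛ k (r.left i)).index,
        HopfAlgebra.antipode (R := k) (φ ((ℛ k (r.left i)).left j)) *
          φ ((ℛ k (r.left i)).right j * HopfAlgebra.antipode (R := k) (r.right i))
        = counit (R := k) (r.left i) • φ (HopfAlgebra.antipode (R := k) (r.right i)) := by
      intro i _
      have inner : ∑ j ∈ (ℛ k (r.left i)).index,
          HopfAlgebra.antipode (R := k) (φ ((ℛ k (r.left i)).left j)) *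
            φ ((ℛ k (r.left i)).right j)
          = algebraMap k B (counit (R := k) (φ (r.left i))) := by
        have := HopfAlgebra.sum_antipode_mul_eq_algebraMap_counit (R := k) (reprBMap φ (ℛ k (r.left i)))
        simpa [reprBMap] using this
      have hcu : counit (R := k) (φ (r.left i)) = counit (R := k) (r.left i) := by
        have := LinearMap.congr_fun (CoalgHomClass.counit_comp φ) (r.left i)
        simpa using this
      calc ∑ j ∈ (ℛ k (r.left i)).index,
            HopfAlgebra.antipode (R := k) (φ ((ℛ k (r.left i)).left j)) *
              φ ((ℛ k (r.left i)).right j * HopfAlgebra.antipode (R := k) (r.right i))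
          = (∑ j ∈ (ℛ k (r.left i)).index,
              HopfAlgebra.antipode (R := k) (φ ((ℛ k (r.left i)).left j)) *
                φ ((ℛ k (r.left i)).right j)) *
              φ (HopfAlgebra.antipode (R := k) (r.right i)) := by
            rw [Finset.sum_mul]
            exact Finset.sum_congr rfl fun j _ => by rw [map_mul, mul_assoc]
        _ = counit (R := k) (r.left i) • φ (HopfAlgebra.antipode (R := k) (r.right i)) := by
            rw [inner, hcu, Algebra.smul_def]
    rw [Finset.sum_congr rfl step]
    conv_rhs => rw [← sum_counit_smul_right r]
    simp only [map_sum, map_smul]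
  exact (hL.symm.trans h).trans hR

lemma sum_antipode_mul_mul {c : A} {ι : Type*} (r : Repr k c ι) (W : A) :
    ∑ j ∈ r.index, HopfAlgebra.antipode (R := k) (r.left j) * (r.right j * W)
      = algebraMap k A (counit (R := k) c) * W := by
  rw [← HopfAlgebra.sum_antipode_mul_eq_algebraMap_counit (R := k) r, Finset.sum_mul]
  exact Finset.sum_congr rfl fun j _ => (mul_assoc _ _ _).symm

lemma sum_mul_antipode_mul {c : A} {ι : Type*} (r : Repr k c ι) (W : A) :
    ∑ j ∈ r.index, r.left j * (HopfAlgebra.antipode (R := k) (r.right j) * W)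
      = algebraMap k A (counit (R := k) c) * W := by
  rw [← HopfAlgebra.sum_mul_antipode_eq_algebraMap_counit (R := k) r, Finset.sum_mul]
  exact Finset.sum_congr rfl fun j _ => (mul_assoc _ _ _).symm

local notation "𝑺" => HopfAlgebra.antipode (R := k) (A := A)

lemma antipode_mul' (a b : A) :
    HopfAlgebra.antipode (R := k) (a * b)
      = HopfAlgebra.antipode (R := k) b * HopfAlgebra.antipode (R := k) a := by
  classical
  set ra := ℛ k a with hra
  set rb := ℛ k b with hrb
  set ya : ∀ i, Repr k (ra.right i) (A × A) := fun i => ℛ k (ra.right i) with hya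
  set yb : ∀ m, Repr k (rb.right m) (A × A) := fun m => ℛ k (rb.right m) with hyb
  -- the central expression
  set E : A := ∑ i ∈ ra.index, ∑ m ∈ rb.index, ∑ j ∈ (ya i).index, ∑ l ∈ (yb m).index,
      𝑺 (rb.left m) * (𝑺 (ra.left i) * (((ya i).left j * (yb m).left l) *
        𝑺 ((ya i).right j * (yb m).right l))) with hE
  -- Grouping 2 : E = S b * S a
  have hE2 : E = HopfAlgebra.antipode (R := k) b * HopfAlgebra.antipode (R := k) a := by
    have inner : ∀ i m, ∑ j ∈ (ya i).index, ∑ l ∈ (yb m).index,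
        ((ya i).left j * (yb m).left l) * 𝑺 ((ya i).right j * (yb m).right l)
        = algebraMap k A (counit (R := k) (ra.right i) * counit (R := k) (rb.right m)) := by
      intro i m
      have h := HopfAlgebra.sum_mul_antipode_eq_algebraMap_counit (R := k) (reprMul (ya i) (yb m))
      simp only [reprMul] at h
      rw [Finset.sum_product, Bialgebra.counit_mul] at h
      exact h
    have hE' : E = ∑ i ∈ ra.index, ∑ m ∈ rb.index,
        (counit (R := k) (ra.right i) * counit (R := k) (rb.right m)) •
          (𝑺 (rb.left m) * 𝑺 (ra.left i)) := by
      rw [hE]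
      refine Finset.sum_congr rfl fun i _ => Finset.sum_congr rfl fun m _ => ?_
      have hpull : ∑ j ∈ (ya i).index, ∑ l ∈ (yb m).index,
          𝑺 (rb.left m) * (𝑺 (ra.left i) * (((ya i).left j * (yb m).left l) *
            𝑺 ((ya i).right j * (yb m).right l)))
        = 𝑺 (rb.left m) * (𝑺 (ra.left i) * ∑ j ∈ (ya i).index, ∑ l ∈ (yb m).index,
            (((ya i).left j * (yb m).left l) * 𝑺 ((ya i).right j * (yb m).right l))) := by
        simp only [Finset.mul_sum]
      rw [hpull, inner i m, ← Algebra.commutes, ← Algebra.smul_def, mul_smul_comm]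
    rw [hE']
    have hb : ∀ i, ∑ m ∈ rb.index,
        (counit (R := k) (ra.right i) * counit (R := k) (rb.right m)) •
          (𝑺 (rb.left m) * 𝑺 (ra.left i))
        = counit (R := k) (ra.right i) •
            (HopfAlgebra.antipode (R := k) b * 𝑺 (ra.left i)) := by
      intro i
      have step : ∀ m ∈ rb.index,
          (counit (R := k) (ra.right i) * counit (R := k) (rb.right m)) •
            (𝑺 (rb.left m) * 𝑺 (ra.left i))
          = counit (R := k) (ra.right i) •
              ((counit (R := k) (rb.right m) • 𝑺 (rb.left m)) * 𝑺 (ra.left i)) := by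
        intro m _
        rw [mul_smul, smul_mul_assoc]
      rw [Finset.sum_congr rfl step, ← Finset.smul_sum, ← Finset.sum_mul]
      simp only [← map_smul]
      rw [← map_sum, sum_counit_smul_left rb]
    rw [Finset.sum_congr rfl fun i _ => hb i]
    have step2 : ∀ i ∈ ra.index,
        counit (R := k) (ra.right i) • (HopfAlgebra.antipode (R := k) b * 𝑺 (ra.left i))
        = HopfAlgebra.antipode (R := k) b * (counit (R := k) (ra.right i) • 𝑺 (ra.left i)) :=
      fun i _ => (mul_smul_comm _ _ _).symm
    rw [Finset.sum_congr rfl step2, ← Finset.mul_sum]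
    simp only [← map_smul]
    rw [← map_sum, sum_counit_smul_left ra]
  -- Grouping 1 : E = S (a*b)
  have hE1 : E = HopfAlgebra.antipode (R := k) (a * b) := by
    have hreorder : E = ∑ m ∈ rb.index, ∑ l ∈ (yb m).index, ∑ i ∈ ra.index,
        ∑ j ∈ (ya i).index,
        𝑺 (rb.left m) * (𝑺 (ra.left i) * (((ya i).left j * (yb m).left l) *
          𝑺 ((ya i).right j * (yb m).right l))) := by
      rw [hE, Finset.sum_comm]
      refine Finset.sum_congr rfl fun m _ => ?_
      rw [Finset.sum_congr rfl fun i _ => Finset.sum_comm]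
      exact Finset.sum_comm
    rw [hreorder]
    have h1 : ∀ m ∈ rb.index, ∀ l ∈ (yb m).index,
        ∑ i ∈ ra.index, ∑ j ∈ (ya i).index,
          𝑺 (rb.left m) * (𝑺 (ra.left i) * (((ya i).left j * (yb m).left l) *
            𝑺 ((ya i).right j * (yb m).right l)))
        = 𝑺 (rb.left m) * ((yb m).left l * 𝑺 (a * (yb m).right l)) := by
      intro m _ l _
      have h := repr_assoc_apply ra (fun i => ℛ k (ra.left i)) ya
        ((LinearMap.mulLeft k (𝑺 (rb.left m))) ∘ₗ (LinearMap.mul' k A) ∘ₗ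
          TensorProduct.map (HopfAlgebra.antipode (R := k))
            ((LinearMap.mul' k A) ∘ₗ
              TensorProduct.map (LinearMap.mulRight k ((yb m).left l))
                ((HopfAlgebra.antipode (R := k)) ∘ₗ LinearMap.mulRight k ((yb m).right l))))
      simp only [LinearMap.comp_apply, TensorProduct.map_tmul, LinearMap.mul'_apply,
        LinearMap.mulLeft_apply, LinearMap.mulRight_apply] at h
      rw [← h]
      have step : ∀ i ∈ ra.index, ∑ j ∈ (ℛ k (ra.left i)).index,
          𝑺 (rb.left m) * (𝑺 ((ℛ k (ra.left i)).left j) *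
            (((ℛ k (ra.left i)).right j * (yb m).left l) * 𝑺 (ra.right i * (yb m).right l)))
          = counit (R := k) (ra.left i) •
              (𝑺 (rb.left m) * ((yb m).left l * 𝑺 (ra.right i * (yb m).right l))) := by
        intro i _
        rw [← Finset.mul_sum]
        rw [Finset.sum_congr rfl fun j _ =>
          congrArg (fun z => 𝑺 ((ℛ k (ra.left i)).left j) * z)
            (mul_assoc ((ℛ k (ra.left i)).right j) ((yb m).left l)
              (𝑺 (ra.right i * (yb m).right l)))]
        rw [sum_antipode_mul_mul (ℛ k (ra.left i))
            ((yb m).left l * 𝑺 (ra.right i * (yb m).right l)),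
          ← Algebra.smul_def, mul_smul_comm]
      rw [Finset.sum_congr rfl step]
      set g : A →ₗ[k] A := LinearMap.mulLeft k (𝑺 (rb.left m)) ∘ₗ
        LinearMap.mulLeft k ((yb m).left l) ∘ₗ (HopfAlgebra.antipode (R := k)) ∘ₗ
        LinearMap.mulRight k ((yb m).right l) with hg
      have hga : ∑ i ∈ ra.index, counit (R := k) (ra.left i) • g (ra.right i) = g a := by
        conv_rhs => rw [← sum_counit_smul_right ra]
        rw [map_sum]
        simp only [map_smul]
      simp only [hg, LinearMap.comp_apply, LinearMap.mulLeft_apply,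
        LinearMap.mulRight_apply] at hga
      exact hga
    rw [Finset.sum_congr rfl fun m hm => Finset.sum_congr rfl fun l hl => h1 m hm l hl]
    -- now collapse over b
    have h2 := repr_assoc_apply rb (fun m => ℛ k (rb.left m)) yb
      ((LinearMap.mul' k A) ∘ₗ
        TensorProduct.map (HopfAlgebra.antipode (R := k))
          ((LinearMap.mul' k A) ∘ₗ
            TensorProduct.map LinearMap.id
              ((HopfAlgebra.antipode (R := k)) ∘ₗ LinearMap.mulLeft k a)))
    simp only [LinearMap.comp_apply, TensorProduct.map_tmul, LinearMap.mul'_apply,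
      LinearMap.mulLeft_apply, LinearMap.id_coe, id_eq] at h2
    rw [← h2]
    have step2 : ∀ m ∈ rb.index, ∑ l ∈ (ℛ k (rb.left m)).index,
        𝑺 ((ℛ k (rb.left m)).left l) * ((ℛ k (rb.left m)).right l * 𝑺 (a * rb.right m))
        = counit (R := k) (rb.left m) • 𝑺 (a * rb.right m) := by
      intro m _
      rw [sum_antipode_mul_mul (ℛ k (rb.left m)) (𝑺 (a * rb.right m)), ← Algebra.smul_def]
    rw [Finset.sum_congr rfl step2]
    have hga : ∑ m ∈ rb.index, counit (R := k) (rb.left m) •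
        ((HopfAlgebra.antipode (R := k)) ∘ₗ LinearMap.mulLeft k a) (rb.right m)
        = ((HopfAlgebra.antipode (R := k)) ∘ₗ LinearMap.mulLeft k a) b := by
      conv_rhs => rw [← sum_counit_smul_right rb]
      rw [map_sum]
      simp only [map_smul]
    simpa only [LinearMap.comp_apply, LinearMap.mulLeft_apply] using hga
  exact hE1.symm.trans hE2

end Helpers


section Projection

open Coalgebra

variable {k I H : Type*} [Field k] [Ring I] [Ring H]
    [HopfAlgebra k I] [HopfAlgebra k H]

lemma mem_RKerSub_iff (p : I →ₐc[k] H) (v : I) :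
    v ∈ RKerSub k p ↔
      (TensorProduct.map (LinearMap.id : I →ₗ[k] I) p.toLinearMap)
        (Coalgebra.comul (R := k) v) = v ⊗ₜ[k] (1 : H) := by
  simp [RKerSub, LinearMap.mem_ker, sub_eq_zero, LinearMap.sub_apply]

lemma fker_apply (p : I →ₐc[k] H) (i : H →ₐc[k] I) {v : I} {ι : Type*} (r : Repr k v ι) :
    fker p i v = ∑ j ∈ r.index,
      r.left j * i (p (HopfAlgebra.antipode (R := k) (r.right j))) := by
  rw [fker, LinearMap.comp_apply, LinearMap.comp_apply, ← r.eq, map_sum, map_sum]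
  simp only [TensorProduct.map_tmul, LinearMap.mul'_apply, LinearMap.id_coe, id_eq,
    LinearMap.comp_apply]
  rfl

lemma fker_mul_i (p : I →ₐc[k] H) (i : H →ₐc[k] I) (hpi : ∀ x : H, p (i x) = x)
    {a : I} (ha : a ∈ RKerSub k p) (w : H) :
    fker p i (a * i w) = Coalgebra.counit (R := k) w • a := by
  classical
  set ra := ℛ k a with hra
  set rw := ℛ k w with hrw
  have hmem : ∑ x ∈ ra.index, ra.left x ⊗ₜ[k] p (ra.right x) = a ⊗ₜ[k] (1 : H) := by
    have h := (mem_RKerSub_iff p a).1 ha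
    rw [← ra.eq, map_sum] at h
    simp at h; exact h
  -- compute fker on the product representation
  have hfk : fker p i (a * i w) = ∑ x ∈ ra.index, ∑ y ∈ rw.index,
      (ra.left x * i (rw.left y)) *
        (i (HopfAlgebra.antipode (R := k) (rw.right y)) *
          i (HopfAlgebra.antipode (R := k) (p (ra.right x)))) := by
    rw [fker_apply p i (reprMul ra (reprBMap i rw))]
    simp only [reprMul, reprBMap]
    rw [Finset.sum_product]
    refine Finset.sum_congr rfl fun x _ => Finset.sum_congr rfl fun y _ => ?_
    rw [antipode_mul', ← hom_antipode i, map_mul, hpi, hom_antipode p, map_mul]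
  rw [hfk]
  -- apply the bilinear gadget to the kernel membership
  set L : I ⊗[k] H →ₗ[k] I := ∑ y ∈ rw.index,
    (LinearMap.mul' k I) ∘ₗ TensorProduct.map
      (LinearMap.mulRight k (i (rw.left y)))
      ((LinearMap.mulLeft k (i (HopfAlgebra.antipode (R := k) (rw.right y)))) ∘ₗ
        (i : H →ₗ[k] I) ∘ₗ (HopfAlgebra.antipode (R := k))) with hL
  have hL1 : ∀ (u : I) (h : H), L (u ⊗ₜ[k] h) = ∑ y ∈ rw.index,
      (u * i (rw.left y)) *
        (i (HopfAlgebra.antipode (R := k) (rw.right y)) *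
          i (HopfAlgebra.antipode (R := k) h)) := by
    intro u h
    rw [hL, LinearMap.sum_apply]
    simp [LinearMap.mul'_apply]
  have key := congrArg L hmem
  rw [map_sum] at key
  simp only [hL1] at key
  rw [key]
  -- evaluate at a ⊗ 1
  have : ∑ y ∈ rw.index, (a * i (rw.left y)) *
      (i (HopfAlgebra.antipode (R := k) (rw.right y)) *
        i (HopfAlgebra.antipode (R := k) (1 : H)))
      = Coalgebra.counit (R := k) w • a := by
    rw [show (HopfAlgebra.antipode (R := k) (1 : H)) = 1 from antipode_one']
    rw [map_one]
    have : ∀ y ∈ rw.index, (a * i (rw.left y)) *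
        (i (HopfAlgebra.antipode (R := k) (rw.right y)) * 1)
        = a * i (rw.left y * HopfAlgebra.antipode (R := k) (rw.right y)) := by
      intro y _
      rw [mul_one, map_mul, mul_assoc]
    rw [Finset.sum_congr rfl this, ← Finset.mul_sum, ← map_sum,
      HopfAlgebra.sum_mul_antipode_eq_smul rw, map_smul, map_one, mul_smul_comm, mul_one]
  exact this

end Projection


lemma adT_tmul' {k A : Type*} [CommSemiring k] [Semiring A] [HopfAlgebra k A]
    {c : A} (d : A) {ι : Type*} (rc : Coalgebra.Repr k c ι) :
    adT k A (c ⊗ₜ[k] d) = ∑ j ∈ rc.index,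
      rc.left j * (d * HopfAlgebra.antipode (R := k) (rc.right j)) := by
  rw [adT]
  simp only [LinearMap.comp_apply, TensorProduct.map_tmul, LinearMap.id_coe, id_eq]
  rw [← rc.eq, TensorProduct.sum_tmul, map_sum, map_sum, map_sum, map_sum, map_sum]
  simp


@[simp] lemma bialgHom_toLinearMap_apply {k A B : Type*} [CommSemiring k] [Semiring A]
    [Semiring B] [Bialgebra k A] [Bialgebra k B] (f : A →ₐc[k] B) (x : A) :
    f.toLinearMap x = f x := rfl

open Coalgebra in
/-- Radford's theorem, vector space case: for a Hopf algebra projection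
`(∂ : I → H, i)` with `B = RKer(∂)`, the maps `Φ(a ⊗ x) = a·i(x)` and
`Ψ(v) = Σ f(v') ⊗ ∂(v'')` are mutually inverse, and `Φ` is an algebra isomorphism from
the smash product onto `I`:
`(a i(x))(b i(y)) = Σ (a (i(x') ▷_ad b)) i(x'' y)` for `a, b ∈ B`, `x, y ∈ H`. -/
theorem radford_theorem {k I H : Type*} [Field k] [Ring I] [Ring H]
    [HopfAlgebra k I] [HopfAlgebra k H]
    (p : I →ₐc[k] H) (i : H →ₐc[k] I) (hpi : ∀ x : H, p (i x) = x)
    (hf : ∀ v : I, fker p i v ∈ RKerSub k p) :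
    (∀ v : I,
      (LinearMap.mul' k I)
          (TensorProduct.map (RKerSub k p).subtype i.toLinearMap
            ((TensorProduct.map (LinearMap.codRestrict (RKerSub k p) (fker p i) hf)
                p.toLinearMap)
              (Coalgebra.comul (R := k) v))) = v) ∧
    (∀ z : (RKerSub k p) ⊗[k] H,
      (TensorProduct.map (LinearMap.codRestrict (RKerSub k p) (fker p i) hf) p.toLinearMap)
          (Coalgebra.comul (R := k)
            ((LinearMap.mul' k I)
              (TensorProduct.map (RKerSub k p).subtype i.toLinearMap z))) = z) ∧
    (∀ a b : I, a ∈ RKerSub k p → b ∈ RKerSub k p → ∀ x y : H,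
      (a * i x) * (b * i y)
        = LinearMap.mul' k I
            (TensorProduct.map
              ((LinearMap.mulLeft k a) ∘ₗ (adT k I)
                ∘ₗ ((TensorProduct.mk k I I).flip b) ∘ₗ i.toLinearMap)
              (i.toLinearMap ∘ₗ (LinearMap.mulRight k y))
              (Coalgebra.comul (R := k) x))) := by
  classical
  refine ⟨?_, ?_, ?_⟩
  · -- Φ ∘ Ψ = id
    intro v
    set r := ℛ k v with hrv
    rw [← r.eq, map_sum, map_sum, map_sum]
    simp only [TensorProduct.map_tmul, LinearMap.mul'_apply, LinearMap.codRestrict_apply,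
      Submodule.coe_subtype, BialgHom.coe_toLinearMap]
    have hc := convE (k := k) (A := I) LinearMap.id
      (i.toLinearMap ∘ₗ p.toLinearMap) r (fun j => ℛ k (r.left j))
    simp only [LinearMap.id_coe, id_eq, LinearMap.comp_apply,
      bialgHom_toLinearMap_apply, map_one, mul_one] at hc
    simp only [bialgHom_toLinearMap_apply]
    refine Eq.trans ?_ hc
    refine Finset.sum_congr rfl fun j _ => ?_
    rw [fker_apply p i (ℛ k (r.left j)), Finset.sum_mul]
    refine Finset.sum_congr rfl fun m _ => ?_
    rw [mul_assoc, map_mul, map_mul]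
  · -- Ψ ∘ Φ = id
    intro z
    induction z using TensorProduct.induction_on with
    | zero => simp
    | add u v hu hv => simp only [map_add, hu, hv]
    | tmul a' x =>
      obtain ⟨a, ha⟩ := a'
      rw [TensorProduct.map_tmul]
      simp only [Submodule.coe_subtype, bialgHom_toLinearMap_apply, LinearMap.mul'_apply]
      set ra := ℛ k a with hra
      set rx := ℛ k x with hrx
      have hmem : ∑ t ∈ ra.index, ra.left t ⊗ₜ[k] p (ra.right t) = a ⊗ₜ[k] (1 : H) := by
        have h := (mem_RKerSub_iff p a).1 ha
        rw [← ra.eq, map_sum] at h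
        simp at h; exact h
      -- expand comul (a * i x)
      have hcm : Coalgebra.comul (R := k) (a * i x)
          = ∑ t ∈ ra.index, ∑ u ∈ rx.index,
              (ra.left t * i (rx.left u)) ⊗ₜ[k] (ra.right t * i (rx.right u)) := by
        rw [← (reprMul ra (reprBMap i rx)).eq]
        simp only [reprMul, reprBMap]
        rw [Finset.sum_product]
      rw [hcm, map_sum]
      simp only [map_sum, TensorProduct.map_tmul, bialgHom_toLinearMap_apply, map_mul, hpi]
      -- apply the gadget L to the kernel membership
      set F := LinearMap.codRestrict (RKerSub k p) (fker p i) hf with hF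
      set L : I ⊗[k] H →ₗ[k] (RKerSub k p) ⊗[k] H := ∑ u ∈ rx.index,
        TensorProduct.map (F ∘ₗ LinearMap.mulRight k (i (rx.left u)))
          (LinearMap.mulRight k (rx.right u)) with hL
      have hL1 : ∀ (w : I) (h : H), L (w ⊗ₜ[k] h) = ∑ u ∈ rx.index,
          F (w * i (rx.left u)) ⊗ₜ[k] (h * rx.right u) := by
        intro w h
        rw [hL, LinearMap.sum_apply]
        simp
      have key := congrArg L hmem
      rw [map_sum] at key
      simp only [hL1] at key
      refine Eq.trans ?_ (Eq.trans key ?_)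
      · exact Finset.sum_congr rfl fun t _ => Finset.sum_congr rfl fun u _ => rfl
      · -- evaluate at a ⊗ 1
        have hFval : ∀ u ∈ rx.index, F (a * i (rx.left u))
            = Coalgebra.counit (R := k) (rx.left u) • (⟨a, ha⟩ : RKerSub k p) := by
          intro u _
          apply Subtype.ext
          simp only [hF, LinearMap.codRestrict_apply, SetLike.val_smul]
          exact fker_mul_i p i hpi ha (rx.left u)
        rw [Finset.sum_congr rfl fun u hu => by rw [hFval u hu, one_mul]]
        have : ∑ u ∈ rx.index,
            (Coalgebra.counit (R := k) (rx.left u) • (⟨a, ha⟩ : RKerSub k p)) ⊗ₜ[k] rx.right u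
            = (⟨a, ha⟩ : RKerSub k p) ⊗ₜ[k] ∑ u ∈ rx.index,
                Coalgebra.counit (R := k) (rx.left u) • rx.right u := by
          rw [TensorProduct.tmul_sum]
          exact Finset.sum_congr rfl fun u _ => TensorProduct.smul_tmul _ _ _
        rw [this, sum_counit_smul_right rx]
  · -- Φ is multiplicative
    intro a b ha hb x y
    set r := ℛ k x with hrx
    conv_rhs => rw [← r.eq]
    rw [map_sum, map_sum]
    have hterm : ∀ j ∈ r.index,
        (LinearMap.mul' k I) ((TensorProduct.map
            ((LinearMap.mulLeft k a) ∘ₗ (adT k I)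
              ∘ₗ ((TensorProduct.mk k I I).flip b) ∘ₗ i.toLinearMap)
            (i.toLinearMap ∘ₗ (LinearMap.mulRight k y)))
          (r.left j ⊗ₜ[k] r.right j))
        = ∑ m ∈ (ℛ k (r.left j)).index,
            (a * (i ((ℛ k (r.left j)).left m) *
              (b * HopfAlgebra.antipode (R := k) (i ((ℛ k (r.left j)).right m)))))
            * (i (r.right j) * i y) := by
      intro j _
      rw [TensorProduct.map_tmul]
      simp only [LinearMap.comp_apply, LinearMap.flip_apply, TensorProduct.mk_apply,
        LinearMap.mulLeft_apply, LinearMap.mulRight_apply, bialgHom_toLinearMap_apply,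
        map_mul]
      rw [adT_tmul' b (reprBMap i (ℛ k (r.left j)))]
      simp only [reprBMap]
      rw [Finset.mul_sum, TensorProduct.sum_tmul, map_sum]
      simp only [LinearMap.mul'_apply]
    rw [Finset.sum_congr rfl hterm]
    -- use convE over I with c = i x
    have hconv := convE (k := k) (A := I) (LinearMap.mulRight k b) (LinearMap.mulRight k (i y))
      (reprBMap i r) (fun j => reprBMap i (ℛ k (r.left j)))
    simp only [LinearMap.mulRight_apply, reprBMap, mul_one] at hconv
    have expand : ∑ j ∈ r.index, ∑ m ∈ (ℛ k (r.left j)).index,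
        (a * (i ((ℛ k (r.left j)).left m) *
          (b * HopfAlgebra.antipode (R := k) (i ((ℛ k (r.left j)).right m)))))
          * (i (r.right j) * i y)
        = a * ∑ j ∈ r.index, ∑ m ∈ (ℛ k (r.left j)).index,
            (i ((ℛ k (r.left j)).left m) * b) *
              ((HopfAlgebra.antipode (R := k) (i ((ℛ k (r.left j)).right m)) * i (r.right j))
                * i y) := by
      rw [Finset.mul_sum]
      refine Finset.sum_congr rfl fun j _ => ?_
      rw [Finset.mul_sum]
      refine Finset.sum_congr rfl fun m _ => ?_
      simp only [mul_assoc]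
    rw [expand, hconv]
    simp only [mul_assoc, one_mul]
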